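/- Let K be a compact Hausdorff space. Then K is a KLΣ(≤ω)-space if and only if there is a family {C_s : s ∈ 2^(<ω)} of closed subsets of K, indexed by finite binary sequences, satisfying: (i) C_∅ = K; (ii) C_s = C_{s⌢0} ∪ C_{s⌢1} for every s ∈ 2^(<ω); (iii) for every σ ∈ 2^ω the set ⋂_{n∈ℕ} C_{σ|n} is metrizable. -/

import Mathlib

open TopologicalSpace

/-- A topological space `X` is a `KLΣ(≤ω)`-space if there exist a compact metrizable
space `M` and a compact-valued upper semicontinuous onto set-valued map `p : M → Set X`
all of whose values are metrizable. -/
def IsKLSigmaLeOmega (X : Type*) [TopologicalSpace X] : Prop :=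
  ∃ (M : Type) (_ : TopologicalSpace M),
    CompactSpace M ∧ MetrizableSpace M ∧
    ∃ p : M → Set X,
      (⋃ z, p z) = Set.univ ∧
      (∀ z, IsCompact (p z)) ∧
      (∀ U : Set X, IsOpen U → IsOpen {z | p z ⊆ U}) ∧
      ∀ z, MetrizableSpace (p z)

/-- A subset of a metrizable set is metrizable. -/
private lemma metrizable_of_subset {X : Type*} [TopologicalSpace X] {S T : Set X}
    (h : S ⊆ T) (hT : MetrizableSpace T) : MetrizableSpace S :=
  haveI := hT
  (Topology.IsEmbedding.inclusion h).metrizableSpace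

/-- A compact Hausdorff space `K` is a `KLΣ(≤ω)`-space if and only if there is a family
`{C_s : s ∈ 2^{<ω}}` of closed subsets of `K` (indexed by finite binary sequences,
modelled as `List Bool`) with `C_∅ = K`, `C_s = C_{s⌢0} ∪ C_{s⌢1}` for all `s`, and
`⋂_n C_{σ|n}` metrizable for every `σ ∈ 2^ω`. -/
theorem isKLSigmaLeOmega_iff_tree_of_closed_sets
    (K : Type*) [TopologicalSpace K] [CompactSpace K] [T2Space K] :
    IsKLSigmaLeOmega K ↔
      ∃ C : List Bool → Set K,
        (∀ s, IsClosed (C s)) ∧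
        C [] = Set.univ ∧
        (∀ s : List Bool, C s = C (s ++ [false]) ∪ C (s ++ [true])) ∧
        ∀ σ : ℕ → Bool,
          MetrizableSpace ↥(⋂ n : ℕ, C (List.ofFn fun i : Fin n => σ i)) := by
  constructor
  · rintro ⟨M, tM, hcM, hmM, p, ponto, pcomp, pusc, pmet⟩
    rcases isEmpty_or_nonempty M with hM | hM
    · -- degenerate case: `M` is empty, so `K` is empty.
      have hKe : IsEmpty K := by
        rw [← Set.univ_eq_empty_iff, ← ponto]
        exact Set.iUnion_of_empty _
      refine ⟨fun _ => Set.univ, fun _ => isClosed_univ, rfl,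
        fun s => (Set.union_self _).symm, fun σ => ?_⟩
      haveI : IsEmpty ↥(⋂ _ : ℕ, (Set.univ : Set K)) := ⟨fun x => hKe.elim x.1⟩
      infer_instance
    · -- main case
      letI : MetricSpace M := metrizableSpaceMetric M
      obtain ⟨x, hx⟩ : ∃ x : ℕ → M, DenseRange x :=
        ⟨TopologicalSpace.denseSeq M, TopologicalSpace.denseRange_denseSeq M⟩
      set r : ℕ → ℝ := fun k => 1 / ((Nat.unpair k).2 + 1) with hr_def
      have hr : ∀ k, 0 < r k := fun k => by positivity
      set A : ℕ → Set M := fun k => Metric.closedBall (x (Nat.unpair k).1) (r k) with hA_def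
      set B : ℕ → Set M := fun k => (Metric.ball (x (Nat.unpair k).1) (r k))ᶜ with hB_def
      set D : ℕ → Bool → Set M := fun k b => if b then A k else B k with hD_def
      have hDclosed : ∀ k b, IsClosed (D k b) := by
        intro k b
        cases b <;> simp only [hD_def, if_true, if_false, Bool.false_eq_true]
        · exact Metric.isOpen_ball.isClosed_compl
        · exact Metric.isClosed_closedBall
      have hDunion : ∀ k, D k false ∪ D k true = Set.univ := by
        intro k
        simp only [hD_def, if_true, if_false, Bool.false_eq_true]
        ext w
        by_cases hw : w ∈ Metric.ball (x (Nat.unpair k).1) (r k)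
        · exact ⟨fun _ => trivial, fun _ => Or.inr (Metric.ball_subset_closedBall hw)⟩
        · exact ⟨fun _ => trivial, fun _ => Or.inl hw⟩
      have hsep : ∀ y z : M, y ≠ z → ∃ k, y ∉ D k false ∧ z ∉ D k true := by
        intro y z hne
        have hd : 0 < dist y z := dist_pos.2 hne
        obtain ⟨m, hm⟩ := exists_nat_one_div_lt (by linarith : (0 : ℝ) < dist y z / 2)
        set rr : ℝ := 1 / ((m : ℝ) + 1) with hrr_def
        have hrrpos : 0 < rr := by positivity
        obtain ⟨i, hi⟩ := Metric.denseRange_iff.1 hx y rr hrrpos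
        refine ⟨Nat.pair i m, ?_, ?_⟩
        · have hrk : r (Nat.pair i m) = rr := by
            simp [hr_def, hrr_def, Nat.unpair_pair]
          simp only [hD_def, if_false, Bool.false_eq_true, hB_def, Set.mem_compl_iff, not_not]
          rw [hrk]
          simp only [Nat.unpair_pair]
          exact Metric.mem_ball.2 hi
        · have hrk : r (Nat.pair i m) = rr := by
            simp [hr_def, hrr_def, Nat.unpair_pair]
          simp only [hD_def, if_true, hA_def]
          rw [hrk]
          simp only [Nat.unpair_pair]
          intro hzA
          have h1 : dist z (x i) ≤ rr := Metric.mem_closedBall.1 hzA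
          have h2 : dist y z ≤ dist y (x i) + dist (x i) z := dist_triangle _ _ _
          have h3 : dist (x i) z = dist z (x i) := dist_comm _ _
          linarith
      -- the tree of closed subsets of M
      set Ms : List Bool → Set M :=
        fun s => ⋂ (k : ℕ) (_ : k < s.length), D k (s.getD k false) with hMs_def
      have hMs_mem : ∀ (s : List Bool) (w : M),
          w ∈ Ms s ↔ ∀ k < s.length, w ∈ D k (s.getD k false) := by
        intro s w; simp [hMs_def]
      have hMs_closed : ∀ s, IsClosed (Ms s) :=
        fun s => isClosed_iInter fun k => isClosed_iInter fun _ => hDclosed _ _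
      have hMs_nil : Ms [] = Set.univ := by
        ext w; simp [hMs_mem]
      have hMs_concat : ∀ (s : List Bool) (b : Bool),
          Ms (s ++ [b]) = Ms s ∩ D s.length b := by
        intro s b
        ext w
        simp only [hMs_mem, Set.mem_inter_iff, List.length_append, List.length_singleton]
        constructor
        · intro h
          refine ⟨fun k hk => ?_, ?_⟩
          · have := h k (by omega)
            rwa [List.getD_append _ _ _ _ hk] at this
          · have := h s.length (by omega)
            rwa [List.getD_append_right _ _ _ _ le_rfl, Nat.sub_self] at this
        · rintro ⟨h1, h2⟩ k hk
          rcases lt_or_ge k s.length with hk' | hk'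
          · rw [List.getD_append _ _ _ _ hk']
            exact h1 k hk'
          · have hk'' : k = s.length := by omega
            subst hk''
            rwa [List.getD_append_right _ _ _ _ le_rfl, Nat.sub_self]
      -- the tree of closed subsets of K
      set C : List Bool → Set K := fun s => closure (⋃ z ∈ Ms s, p z) with hC_def
      have hMG : ∀ (σ : ℕ → Bool) (n : ℕ),
          Ms (List.ofFn fun i : Fin n => σ i) =
            ⋂ (k : ℕ) (_ : k < n), D k (σ k) := by
        intro σ n
        ext w
        simp only [hMs_mem, Set.mem_iInter, List.length_ofFn]
        constructor
        · intro h k hk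
          have := h k hk
          rwa [List.getD_eq_getElem _ _ (by simpa using hk), List.getElem_ofFn] at this
        · intro h k hk
          rw [List.getD_eq_getElem _ _ (by simpa using hk), List.getElem_ofFn]
          exact h k hk
      -- key: each branch intersection is inside a single value of p
      have hsubp : ∀ σ : ℕ → Bool,
          ∃ z : M, (⋂ n : ℕ, C (List.ofFn fun i : Fin n => σ i)) ⊆ p z := by
        intro σ
        set G : ℕ → Set M := fun n => ⋂ (k : ℕ) (_ : k < n), D k (σ k) with hG_def
        have hGclosed : ∀ n, IsClosed (G n) :=
          fun n => isClosed_iInter fun k => isClosed_iInter fun _ => hDclosed _ _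
        have hGcompact : ∀ n, IsCompact (G n) := fun n => (hGclosed n).isCompact
        have hGanti : Antitone G := by
          intro a b hab w hw
          simp only [hG_def, Set.mem_iInter] at hw ⊢
          exact fun k hk => hw k (lt_of_lt_of_le hk hab)
        have hGsub : ∀ y ∈ ⋂ n, G n, ∀ z ∈ ⋂ n, G n, y = z := by
          intro y hy z hz
          by_contra hne
          obtain ⟨k, hyB, hzA⟩ := hsep y z hne
          have hyk : y ∈ D k (σ k) := by
            have := Set.mem_iInter.1 hy (k + 1)
            exact Set.mem_iInter.1 (Set.mem_iInter.1 this k) (Nat.lt_succ_self k)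
          have hzk : z ∈ D k (σ k) := by
            have := Set.mem_iInter.1 hz (k + 1)
            exact Set.mem_iInter.1 (Set.mem_iInter.1 this k) (Nat.lt_succ_self k)
          cases hσk : σ k
          · rw [hσk] at hyk; exact hyB hyk
          · rw [hσk] at hzk; exact hzA hzk
        by_cases hne : ∀ n, (G n).Nonempty
        · have hiG : (⋂ n, G n).Nonempty :=
            IsCompact.nonempty_iInter_of_directed_nonempty_isCompact_isClosed G
              (hGanti.directed_ge) hne hGcompact hGclosed
          obtain ⟨z, hz⟩ := hiG
          refine ⟨z, fun xx hxx => ?_⟩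
          by_contra hxp
          obtain ⟨U, V, hUo, hVo, hpU, hxV, hUV⟩ :=
            NormalSpace.normal (p z) {xx} (pcomp z).isClosed isClosed_singleton
              (Set.disjoint_singleton_right.2 hxp)
          have hWopen : IsOpen {w : M | p w ⊆ U} := pusc U hUo
          obtain ⟨N, hN⟩ :=
            exists_subset_nhds_of_isCompact' (hGanti.directed_ge) hGcompact hGclosed
              (U := {w : M | p w ⊆ U})
              (fun y hy => by
                have : y = z := hGsub y hy z hz
                subst this
                exact hWopen.mem_nhds hpU)
          have hxxC : xx ∈ C (List.ofFn fun i : Fin N => σ i) := Set.mem_iInter.1 hxx N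
          have hsubU : (⋃ w ∈ Ms (List.ofFn fun i : Fin N => σ i), p w) ⊆ U := by
            rw [hMG σ N]
            intro y hy
            obtain ⟨w, hw, hyw⟩ := Set.mem_iUnion₂.1 hy
            exact hN hw hyw
          have hxxU : xx ∈ closure U := closure_mono hsubU hxxC
          have hdisj : Disjoint (closure U) V := hUV.closure_left hVo
          exact Set.disjoint_left.1 hdisj hxxU (hxV rfl)
        · push_neg at hne
          obtain ⟨n, hn⟩ := hne
          have hMsn : Ms (List.ofFn fun i : Fin n => σ i) = ∅ := by
            rw [hMG σ n]; exact hn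
          have hCn : C (List.ofFn fun i : Fin n => σ i) = ∅ := by
            rw [hC_def]; simp [hMsn]
          refine ⟨hM.some, fun xx hxx => absurd (Set.mem_iInter.1 hxx n) ?_⟩
          rw [hCn]
          exact Set.notMem_empty xx
      refine ⟨C, fun s => isClosed_closure, ?_, ?_, fun σ => ?_⟩
      · rw [hC_def]
        simp only [hMs_nil, Set.mem_univ, Set.iUnion_true, ponto, closure_univ]
      · intro s
        have : Ms (s ++ [false]) ∪ Ms (s ++ [true]) = Ms s := by
          rw [hMs_concat s false, hMs_concat s true, ← Set.inter_union_distrib_left,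
            hDunion, Set.inter_univ]
        rw [hC_def]
        simp only
        rw [← closure_union, ← Set.biUnion_union, this]
      · obtain ⟨z, hzsub⟩ := hsubp σ
        exact metrizable_of_subset hzsub (pmet z)
  · rintro ⟨C, hC_closed, hC_nil, hC_split, hC_met⟩
    have hstep : ∀ (l : List Bool) (b : Bool), C (l ++ [b]) ⊆ C l := by
      intro l b
      rw [hC_split l]
      cases b
      · exact Set.subset_union_left
      · exact Set.subset_union_right
    have hofFn_succ : ∀ (σ : ℕ → Bool) (n : ℕ),
        (List.ofFn fun i : Fin (n + 1) => σ i) = (List.ofFn fun i : Fin n => σ i) ++ [σ n] := by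
      intro σ n
      rw [List.ofFn_succ']
      simp [List.concat_eq_append]
    refine ⟨ℕ → Bool, inferInstance, inferInstance, ?_,
      fun σ => ⋂ n : ℕ, C (List.ofFn fun i : Fin n => σ i), ?_, ?_, ?_, hC_met⟩
    · exact TopologicalSpace.metrizableSpace_of_t3_secondCountable (ℕ → Bool)
    · -- onto
      rw [Set.iUnion_eq_univ_iff]
      intro xx
      -- construct a branch through the tree containing xx
      have step : ∀ t : {l : List Bool // xx ∈ C l},
          ∃ t' : {l : List Bool // xx ∈ C l}, ∃ b : Bool, t'.1 = t.1 ++ [b] := by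
        rintro ⟨l, hl⟩
        rw [hC_split l] at hl
        rcases hl with hl | hl
        · exact ⟨⟨l ++ [false], hl⟩, false, rfl⟩
        · exact ⟨⟨l ++ [true], hl⟩, true, rfl⟩
      choose f hf using step
      set g : ℕ → {l : List Bool // xx ∈ C l} :=
        fun n => f^[n] ⟨[], by rw [hC_nil]; trivial⟩ with hg_def
      have hg_succ : ∀ n, g (n + 1) = f (g n) := by
        intro n
        rw [hg_def]
        simp [Function.iterate_succ_apply']
      have hg_len : ∀ n, (g n).1.length = n := by
        intro n
        induction n with
        | zero => simp [hg_def]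
        | succ n ih =>
          obtain ⟨b, hb⟩ := hf (g n)
          rw [hg_succ n, hb, List.length_append, ih, List.length_singleton]
      set σ : ℕ → Bool := fun n => (g (n + 1)).1.getD n false with hσ_def
      have hgσ : ∀ n, (List.ofFn fun i : Fin n => σ i) = (g n).1 := by
        intro n
        induction n with
        | zero => simp [hg_def]
        | succ n ih =>
          obtain ⟨b, hb⟩ := hf (g n)
          have hgn1 : (g (n + 1)).1 = (g n).1 ++ [b] := by rw [hg_succ n, hb]
          have hσn : σ n = b := by
            rw [hσ_def]
            simp only
            rw [hgn1, List.getD_append_right _ _ _ _ (hg_len n).le]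
            rw [hg_len n, Nat.sub_self]
            rfl
          rw [hofFn_succ σ n, ih, hgn1, hσn]
      refine ⟨σ, Set.mem_iInter.2 fun n => ?_⟩
      rw [hgσ n]
      exact (g n).2
    · -- compact-valued
      intro σ
      exact (isClosed_iInter fun n => hC_closed _).isCompact
    · -- upper semicontinuous
      intro U hU
      rw [isOpen_iff_forall_mem_open]
      intro σ hσ
      have hanti : Antitone fun n => C (List.ofFn fun i : Fin n => σ i) := by
        apply antitone_nat_of_succ_le
        intro n
        rw [hofFn_succ σ n]
        exact hstep _ _
      obtain ⟨N, hN⟩ :=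
        exists_subset_nhds_of_isCompact' (V := fun n => C (List.ofFn fun i : Fin n => σ i))
          (hanti.directed_ge) (fun n => (hC_closed _).isCompact) (fun n => hC_closed _)
          (U := U) (fun y hy => hU.mem_nhds (hσ hy))
      refine ⟨{τ : ℕ → Bool | ∀ i : Fin N, τ i = σ i}, ?_, ?_, fun i => rfl⟩
      · intro τ hτ
        have heq : (List.ofFn fun i : Fin N => τ i) = (List.ofFn fun i : Fin N => σ i) := by
          congr 1
          funext i
          exact hτ i
        intro y hy
        apply hN
        rw [← heq]
        exact Set.mem_iInter.1 hy N
      · have : {τ : ℕ → Bool | ∀ i : Fin N, τ i = σ i} =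
            ⋂ i : Fin N, (fun τ : ℕ → Bool => τ i) ⁻¹' {σ i} := by
          ext τ; simp [Set.mem_iInter]
        rw [this]
        exact isOpen_iInter_of_finite fun i =>
          (continuous_apply (i : ℕ)).isOpen_preimage _ (isOpen_discrete _)
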